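/- Let M = M_L(D, B_0) be a strict gammoid and S ⊆ B_0. Then the contraction M / S is the strict gammoid M_L(D - S, B_0 \ S). -/

import Mathlib

open Set


/-- A finite directed path/walk or a ray, encoded by a vertex function and a length:
the number of edges, `⊤` for a ray. Only indices `≤ len` are meaningful. -/
structure DiWalk (V : Type*) where
  vtx : ℕ → V
  len : ℕ∞

namespace DiWalk

variable {V : Type*} (w : DiWalk V)

/-- The vertices of the walk. -/
def support : Set V := {v | ∃ i : ℕ, (i : ℕ∞) ≤ w.len ∧ w.vtx i = v}

/-- The directed edges of the walk. -/
def edges : Set (V × V) := {e | ∃ i : ℕ, (i : ℕ∞) + 1 ≤ w.len ∧ e = (w.vtx i, w.vtx (i + 1))}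

/-- The initial vertex. -/
def Ini : V := w.vtx 0

/-- The terminal vertex (meaningful for finite walks). -/
def Ter : V := w.vtx w.len.toNat

/-- `w` is a ray, i.e. one-way infinite. -/
def IsRay : Prop := w.len = ⊤

/-- `w` is a (finite) directed path or a directed ray in the digraph `D`: consecutive
vertices are joined by edges of `D` and no vertex is repeated. -/
def IsPathIn (D : V → V → Prop) : Prop :=
  (∀ i : ℕ, (i : ℕ∞) + 1 ≤ w.len → D (w.vtx i) (w.vtx (i + 1))) ∧
  (∀ i j : ℕ, (i : ℕ∞) ≤ w.len → (j : ℕ∞) ≤ w.len → w.vtx i = w.vtx j → i = j)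

end DiWalk

variable {V : Type*}

/-- The vertex set of a family of walks. -/
def VSet (Q : Set (DiWalk V)) : Set V := ⋃ q ∈ Q, q.support

/-- The edge set of a family of walks. -/
def ESet (Q : Set (DiWalk V)) : Set (V × V) := ⋃ q ∈ Q, q.edges

/-- The set of initial vertices of a family of walks. -/
def IniSet (Q : Set (DiWalk V)) : Set V := DiWalk.Ini '' Q

/-- The set of terminal vertices of the finite members of a family of walks. -/
def TerSet (Q : Set (DiWalk V)) : Set V := {v | ∃ q ∈ Q, ¬ q.IsRay ∧ q.Ter = v}

/-- The members of `Q` are pairwise vertex-disjoint. -/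
def PairwiseDisjointWalks (Q : Set (DiWalk V)) : Prop :=
  ∀ p ∈ Q, ∀ q ∈ Q, p ≠ q → Disjoint p.support q.support

/-- `Q` is a set of pairwise disjoint directed paths or rays in `D`. -/
def IsPathSystem (D : V → V → Prop) (Q : Set (DiWalk V)) : Prop :=
  (∀ q ∈ Q, q.IsPathIn D) ∧ PairwiseDisjointWalks Q

/-- A linkage in the dimaze `(D, B0)`: a set of pairwise disjoint finite directed paths
ending in `B0`. -/
def IsLinkage (D : V → V → Prop) (B0 : Set V) (Q : Set (DiWalk V)) : Prop :=
  IsPathSystem D Q ∧ ∀ q ∈ Q, ¬ q.IsRay ∧ q.Ter ∈ B0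

/-- `I` is linkable to `B0` in `(D, B0)`. -/
def Linkable (D : V → V → Prop) (B0 : Set V) (I : Set V) : Prop :=
  ∃ Q, IsLinkage D B0 Q ∧ IniSet Q = I

/-- `I` is linkable onto `B0`: some linkage from `I` has terminal vertex set exactly `B0`. -/
def LinkableOnto (D : V → V → Prop) (B0 : Set V) (I : Set V) : Prop :=
  ∃ Q, IsLinkage D B0 Q ∧ IniSet Q = I ∧ TerSet Q = B0

/-- `B0` is a set of sinks of `D`. -/
def IsDimaze (D : V → V → Prop) (B0 : Set V) : Prop := ∀ b ∈ B0, ∀ v, ¬ D b v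

/-- `v` is the centre of a linking fan: infinitely many non-trivial directed paths to `B0`
from `v`, pairwise meeting only in `v`. -/
def IsFanCentre (D : V → V → Prop) (B0 : Set V) (v : V) : Prop :=
  ∃ P : Set (DiWalk V), P.Infinite ∧
    (∀ p ∈ P, p.IsPathIn D ∧ ¬ p.IsRay ∧ 1 ≤ p.len ∧ p.Ini = v ∧ p.Ter ∈ B0) ∧
    (∀ p ∈ P, ∀ q ∈ P, p ≠ q → p.support ∩ q.support ⊆ {v})

/-- The ray `R` is the spine of an outgoing comb with teeth ending in `B0`: there are
infinitely many pairwise disjoint non-trivial paths from distinct vertices of `R` to `B0`,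
each meeting `R` exactly in its initial vertex. -/
def IsSpine (D : V → V → Prop) (B0 : Set V) (R : DiWalk V) : Prop :=
  R.IsPathIn D ∧ R.IsRay ∧
  ∃ P : Set (DiWalk V), P.Infinite ∧
    (∀ p ∈ P, p.IsPathIn D ∧ ¬ p.IsRay ∧ 1 ≤ p.len ∧ p.Ini ∈ R.support ∧ p.Ter ∈ B0 ∧
      p.support ∩ R.support = {p.Ini}) ∧
    PairwiseDisjointWalks P

/-- `(D, B0)` contains no subdivision of an outgoing comb. -/
def COFree (D : V → V → Prop) (B0 : Set V) : Prop := ¬ ∃ R, IsSpine D B0 R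

/-- `(D, B0)` contains no subdivision of a linking fan. -/
def FanFree (D : V → V → Prop) (B0 : Set V) : Prop := ¬ ∃ v, IsFanCentre D B0 v

/-- A topological path in `(D, B0)`. -/
def IsTopPath (D : V → V → Prop) (B0 : Set V) (w : DiWalk V) : Prop :=
  w.IsPathIn D ∧
    ((¬ w.IsRay ∧ w.Ter ∈ B0) ∨ (¬ w.IsRay ∧ IsFanCentre D B0 w.Ter) ∨ IsSpine D B0 w)

/-- `I` is topologically linkable in `(D, B0)`. -/
def TopLinkable (D : V → V → Prop) (B0 : Set V) (I : Set V) : Prop :=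
  ∃ Q : Set (DiWalk V), (∀ q ∈ Q, IsTopPath D B0 q) ∧ PairwiseDisjointWalks Q ∧ IniSet Q = I
/-- Deletion of `X` from the matroid `M`. -/
def Matroid.del {α : Type*} (M : Matroid α) (X : Set α) : Matroid α := M.restrict (M.E \ X)

/-- Contraction of `X` in the matroid `M`, defined via duality. -/
def Matroid.con {α : Type*} (M : Matroid α) (X : Set α) : Matroid α := (M.dual.del X).dual

/-- `C` is a circuit of `M`: a minimal dependent set. -/
def Matroid.IsCircuitOf {α : Type*} (M : Matroid α) (C : Set α) : Prop :=
  C ⊆ M.E ∧ ¬ M.Indep C ∧ ∀ C' ⊂ C, M.Indep C'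

/-- `e` is a coloop of `M`: an element of the ground set lying in no circuit. -/
def Matroid.IsColoopOf {α : Type*} (M : Matroid α) (e : α) : Prop :=
  e ∈ M.E ∧ ∀ C, M.IsCircuitOf C → e ∉ C

/-- `N` is a minor of `M`. -/
def Matroid.IsMinorOf {α : Type*} (N M : Matroid α) : Prop :=
  ∃ C D, C ⊆ M.E ∧ D ⊆ M.E ∧ Disjoint C D ∧ N = (M.con C).del D


-- Auxiliary lemmas

lemma DiWalk.ini_mem_support (w : DiWalk V) : w.Ini ∈ w.support :=
  ⟨0, by simp, rfl⟩

lemma DiWalk.ter_mem_support (w : DiWalk V) (h : ¬ w.IsRay) : w.Ter ∈ w.support :=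
  ⟨w.len.toNat, by rw [ENat.coe_toNat h], rfl⟩

def trivWalk (s : V) : DiWalk V := ⟨fun _ => s, 0⟩

lemma trivWalk_support (s : V) : (trivWalk s).support = {s} := by
  ext v
  constructor
  · rintro ⟨i, -, rfl⟩; rfl
  · rintro rfl; exact ⟨0, by simp, rfl⟩

lemma trivWalk_not_isRay (s : V) : ¬ (trivWalk s).IsRay := by
  simp [DiWalk.IsRay, trivWalk]

lemma trivWalk_ter (s : V) : (trivWalk s).Ter = s := rfl

lemma trivWalk_ini (s : V) : (trivWalk s).Ini = s := rfl

lemma enat_cast_le_zero {i : ℕ} (h : (i : ℕ∞) ≤ 0) : i = 0 := by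
  exact_mod_cast le_antisymm h zero_le

lemma trivWalk_isPathIn (D : V → V → Prop) (s : V) : (trivWalk s).IsPathIn D := by
  constructor
  · intro i hi
    exfalso
    have : (i : ℕ∞) + 1 ≤ 0 := hi
    have h2 : i + 1 ≤ 0 := by exact_mod_cast this
    omega
  · intro i j hi hj _
    rw [enat_cast_le_zero hi, enat_cast_le_zero hj]

lemma injective_trivWalk : Function.Injective (trivWalk (V := V)) := by
  intro s t h
  exact congrArg (fun w => w.vtx 0) h

/-- A path starting at a sink is trivial. -/
lemma len_eq_zero_of_ini_sink {D : V → V → Prop} {B0 : Set V} (hDim : IsDimaze D B0)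
    {q : DiWalk V} (hq : q.IsPathIn D) (h : q.Ini ∈ B0) : q.len = 0 := by
  by_contra hne
  have h1 : (1 : ℕ∞) ≤ q.len := by
    exact Order.one_le_iff_pos.mpr (pos_iff_ne_zero.mpr hne)
  have := hq.1 0 (by simpa using h1)
  exact hDim _ h _ this

lemma support_eq_singleton_of_len_zero {q : DiWalk V} (h : q.len = 0) :
    q.support = {q.Ini} := by
  ext v
  constructor
  · rintro ⟨i, hi, rfl⟩
    rw [h] at hi
    rw [enat_cast_le_zero hi]; rfl
  · rintro rfl; exact q.ini_mem_support

/-- Vertices of a linkage path in `D - S` avoid `S`. -/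
lemma support_avoids {S : Set V} {B0 : Set V} {D : V → V → Prop} {q : DiWalk V}
    (hq : q.IsPathIn (fun u v => D u v ∧ u ∉ S ∧ v ∉ S)) (hray : ¬ q.IsRay)
    (hter : q.Ter ∈ B0 \ S) : ∀ v ∈ q.support, v ∉ S := by
  rintro v ⟨i, hi, rfl⟩ hvS
  set n := q.len.toNat with hn
  have hcast : (n : ℕ∞) = q.len := ENat.coe_toNat hray
  have h1 : i ≤ n := by exact_mod_cast hi.trans_eq hcast.symm
  by_cases h : (i : ℕ∞) + 1 ≤ q.len
  · exact (hq.1 i h).2.1 hvS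
  · have h2 : ¬ (i + 1 ≤ n) := by
      intro hc
      exact h (by rw [← hcast]; exact_mod_cast hc)
    have : i = n := by omega
    have hv : q.vtx i = q.Ter := by rw [this]; rfl
    exact hter.2 (hv ▸ hvS)

/-- `S` itself is linkable via trivial paths. -/
lemma linkable_of_subset_exits {D : V → V → Prop} {B0 S : Set V} (hS : S ⊆ B0) :
    Linkable D B0 S := by
  refine ⟨trivWalk '' S, ⟨⟨?_, ?_⟩, ?_⟩, ?_⟩
  · rintro q ⟨s, -, rfl⟩; exact trivWalk_isPathIn D s
  · rintro p ⟨s, -, rfl⟩ q ⟨t, -, rfl⟩ hne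
    rw [trivWalk_support, trivWalk_support, disjoint_singleton]
    exact fun h => hne (h ▸ rfl)
  · rintro q ⟨s, hs, rfl⟩
    exact ⟨trivWalk_not_isRay s, hS hs⟩
  · rw [IniSet, ← image_comp]
    exact image_id S

/-- The main combinatorial equivalence. -/
lemma link_equiv {D : V → V → Prop} {B0 S : Set V} (hDim : IsDimaze D B0) (hS : S ⊆ B0)
    (I : Set V) :
    (Disjoint I S ∧ Linkable D B0 (I ∪ S)) ↔
      Linkable (fun u v => D u v ∧ u ∉ S ∧ v ∉ S) (B0 \ S) I := by
  constructor
  · rintro ⟨hdisj, Q, ⟨⟨hpath, hpd⟩, hend⟩, hini⟩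
    -- every s ∈ S is the start of a trivial path of Q
    have hb : ∀ s ∈ S, ∃ q ∈ Q, q.Ini = s := by
      intro s hs
      have : s ∈ IniSet Q := hini ▸ Or.inr hs
      obtain ⟨q, hq, hqs⟩ := this
      exact ⟨q, hq, hqs⟩
    have hsupp : ∀ q ∈ Q, q.Ini ∈ S → q.support = {q.Ini} := fun q hq hIni =>
      support_eq_singleton_of_len_zero (len_eq_zero_of_ini_sink hDim (hpath q hq) (hS hIni))
    -- paths starting in I avoid S
    have hc : ∀ q ∈ Q, q.Ini ∈ I → ∀ v ∈ q.support, v ∉ S := by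
      intro q hq hqI v hv hvS
      obtain ⟨p, hpQ, hpini⟩ := hb v hvS
      have hps : p.support = {v} := by rw [hsupp p hpQ (hpini ▸ hvS), hpini]
      have hqp : q ≠ p := by
        rintro rfl
        exact hdisj.le_bot ⟨hqI, hpini ▸ hvS⟩
      have := hpd q hq p hpQ hqp
      rw [hps, disjoint_singleton_right] at this
      exact this hv
    refine ⟨{q ∈ Q | q.Ini ∈ I}, ⟨⟨?_, ?_⟩, ?_⟩, ?_⟩
    · rintro q ⟨hq, hqI⟩
      refine ⟨fun i hi => ?_, (hpath q hq).2⟩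
      have hvi : q.vtx i ∈ q.support := ⟨i, le_trans le_self_add hi, rfl⟩
      have hvi1 : q.vtx (i + 1) ∈ q.support := ⟨i + 1, by rwa [Nat.cast_add_one], rfl⟩
      exact ⟨(hpath q hq).1 i hi, hc q hq hqI _ hvi, hc q hq hqI _ hvi1⟩
    · rintro p ⟨hp, -⟩ q ⟨hq, -⟩ hne
      exact hpd p hp q hq hne
    · rintro q ⟨hq, hqI⟩
      obtain ⟨hray, hter⟩ := hend q hq
      exact ⟨hray, hter, hc q hq hqI _ (q.ter_mem_support hray)⟩
    · ext x
      constructor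
      · rintro ⟨q, ⟨-, hqI⟩, rfl⟩; exact hqI
      · intro hx
        have : x ∈ IniSet Q := hini ▸ Or.inl hx
        obtain ⟨q, hq, rfl⟩ := this
        exact ⟨q, ⟨hq, hx⟩, rfl⟩
  · rintro ⟨Q', ⟨⟨hpath', hpd'⟩, hend'⟩, hini'⟩
    have hd : ∀ q ∈ Q', ∀ v ∈ q.support, v ∉ S := fun q hq =>
      support_avoids (hpath' q hq) (hend' q hq).1 (hend' q hq).2
    have hdisj : Disjoint I S := by
      rw [disjoint_left]
      rintro x hx
      rw [← hini'] at hx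
      obtain ⟨q, hq, rfl⟩ := hx
      exact hd q hq _ q.ini_mem_support
    refine ⟨hdisj, Q' ∪ trivWalk '' S, ⟨⟨?_, ?_⟩, ?_⟩, ?_⟩
    · rintro q (hq | ⟨s, -, rfl⟩)
      · exact ⟨fun i hi => ((hpath' q hq).1 i hi).1, (hpath' q hq).2⟩
      · exact trivWalk_isPathIn D s
    · rintro p (hp | ⟨s, hs, rfl⟩) q (hq | ⟨t, ht, rfl⟩) hne
      · exact hpd' p hp q hq hne
      · rw [trivWalk_support, disjoint_singleton_right]
        exact fun h => hd p hp _ h ht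
      · rw [trivWalk_support, disjoint_singleton_left]
        exact fun h => hd q hq _ h hs
      · rw [trivWalk_support, trivWalk_support, disjoint_singleton]
        exact fun h => hne (h ▸ rfl)
    · rintro q (hq | ⟨s, hs, rfl⟩)
      · exact ⟨(hend' q hq).1, (hend' q hq).2.1⟩
      · exact ⟨trivWalk_not_isRay s, hS hs⟩
    · rw [IniSet, image_union, ← image_comp,
        show (DiWalk.Ini ∘ trivWalk) '' S = S from image_id S,
        show DiWalk.Ini '' Q' = I from hini']



lemma con_indep_iff {α : Type*} (M : Matroid α) (hE : M.E = Set.univ) {S : Set α}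
    (hSi : M.Indep S) (I : Set α) :
    (M.con S).Indep I ↔ Disjoint I S ∧ M.Indep (I ∪ S) := by
  have hSE : M✶.E \ S ⊆ M✶.E := diff_subset
  have hcon : (M.con S).Indep I ↔
      I ⊆ M✶.E \ S ∧ ∃ B, M✶.IsBasis B (M✶.E \ S) ∧ Disjoint I B := by
    rw [Matroid.con, Matroid.del]
    rw [Matroid.dual_indep_iff_exists']
    simp only [Matroid.restrict_ground_eq]
    constructor
    · rintro ⟨hIsub, B, hB, hdisj⟩
      exact ⟨hIsub, B, (Matroid.isBase_restrict_iff hSE).mp hB, hdisj⟩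
    · rintro ⟨hIsub, B, hB, hdisj⟩
      exact ⟨hIsub, B, (Matroid.isBase_restrict_iff hSE).mpr hB, hdisj⟩
  rw [hcon]
  constructor
  · rintro ⟨hIsub, B, hB, hdisjIB⟩
    have hIS : Disjoint I S := disjoint_left.mpr fun x hx => (hIsub hx).2
    refine ⟨hIS, ?_⟩
    -- B is dual-independent, so there is a base B₁ of M disjoint from B
    obtain ⟨-, B₁, hB₁, hBB₁⟩ := (Matroid.dual_indep_iff_exists' ).mp hB.indep
    -- a basis J of I ∪ S containing S
    obtain ⟨J, hJ, hSJ⟩ := hSi.subset_isBasis_of_subset (subset_union_right (s := I))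
      (by rw [hE]; exact subset_univ _)
    by_contra hdep
    have hne : ¬ (I ∪ S ⊆ J) := fun h => hdep (hJ.indep.subset ((h.antisymm hJ.subset).symm ▸ subset_rfl))
    obtain ⟨z, hzIS, hzJ⟩ := not_subset.mp hne
    have hzI : z ∈ I := hzIS.elim id fun h => absurd (hSJ h) hzJ
    obtain ⟨B₃, hB₃, hJB₃, hB₃sub⟩ := hJ.indep.exists_isBase_subset_union_isBase hB₁
    have hzB₃ : z ∉ B₃ := by
      intro hz
      have : J = insert z J := hJ.eq_of_subset_indep (hB₃.indep.subset (insert_subset hz hJB₃))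
        (subset_insert _ _) (insert_subset hzIS hJ.subset)
      exact hzJ (this ▸ mem_insert z J)
    have hBI' : Disjoint B I := hdisjIB.symm
    have hBS : Disjoint B S := disjoint_left.mpr fun x hx => (hB.subset hx).2
    have hind : M✶.Indep (insert z B) := by
      rw [Matroid.dual_indep_iff_exists']
      refine ⟨insert_subset (by simp [hE]) (hB.indep.subset_ground), B₃, hB₃, ?_⟩
      refine disjoint_left.mpr ?_
      rintro x (rfl | hx) hxB₃
      · exact hzB₃ hxB₃
      rcases hB₃sub hxB₃ with h | h
      · rcases hJ.subset h with h' | h'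
        · exact hBI'.le_bot ⟨hx, h'⟩
        · exact hBS.le_bot ⟨hx, h'⟩
      · exact hBB₁.le_bot ⟨hx, h⟩
    have : B = insert z B := hB.eq_of_subset_indep hind (subset_insert _ _)
      (insert_subset ⟨by simp [hE],
        fun hzS => hIS.le_bot ⟨hzI, hzS⟩⟩ hB.subset)
    exact hdisjIB.le_bot ⟨hzI, this ▸ mem_insert z B⟩
  · rintro ⟨hIS, hind⟩
    obtain ⟨B₀, hB₀, hsub⟩ := hind.exists_isBase_superset
    have hB : M✶.IsBase (M.E \ B₀) := hB₀.compl_isBase_dual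
    have hBsub : M.E \ B₀ ⊆ M✶.E \ S := fun x hx =>
      ⟨hx.1, fun hxS => hx.2 (hsub (Or.inr hxS))⟩
    refine ⟨fun x hx => ⟨by simp [hE],
        fun hxS => hIS.le_bot ⟨hx, hxS⟩⟩, M.E \ B₀, ?_, ?_⟩
    · refine hB.indep.isBasis_of_maximal_subset hBsub (fun J hJ hBJ _ => ?_) hSE
      rw [hB.eq_of_subset_indep hJ hBJ]
    · exact disjoint_left.mpr fun x hx hx' => hx'.2 (hsub (Or.inl hx))


theorem contract_subset_of_exits {V : Type*} (D : V → V → Prop) (B0 : Set V)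
    (hDim : IsDimaze D B0) (M : Matroid V) (hE : M.E = Set.univ)
    (hInd : ∀ I, M.Indep I ↔ Linkable D B0 I) (S : Set V) (hS : S ⊆ B0) :
    ∀ I, (M.con S).Indep I ↔
      Linkable (fun u v => D u v ∧ u ∉ S ∧ v ∉ S) (B0 \ S) I := by
  intro I
  have hSi : M.Indep S := (hInd S).mpr (linkable_of_subset_exits hS)
  rw [con_indep_iff M hE hSi I, hInd (I ∪ S)]
  exact link_equiv hDim hS I
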